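/- arXiv:1701.07137 — 3 statements merged into one kernel-verified Lean document; each statement's English description precedes it below -/
import Mathlib

section
/- Let T be a finite tree with at least three vertices such that for every path (v_0, v_1, …, v_k) between two leaves v_0 and v_k, the sum of the degrees of the interior vertices v_1, …, v_{k−1} is at most M. Then the number of leaves of T is at most e^(M/e). -/
open SimpleGraph Finset

namespace Stmt3Aux

variable {V : Type*} [Fintype V] [DecidableEq V] {G : SimpleGraph V} [DecidableRel G.Adj]

set_option linter.unusedSectionVars false

/-- Vertices reachable from `v` by a path avoiding `u`. -/
def Reach (G : SimpleGraph V) (u v : V) : Set V :=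
  {x | ∃ p : G.Walk v x, p.IsPath ∧ u ∉ p.support}

/-- Leaves reachable from `v` by a path avoiding `u`. -/
noncomputable def LF (G : SimpleGraph V) [DecidableRel G.Adj] (u v : V) : Finset V :=
  (Set.toFinite {x | x ∈ Reach G u v ∧ G.degree x = 1}).toFinset

lemma mem_LF {u v x : V} :
    x ∈ LF G u v ↔ x ∈ Reach G u v ∧ G.degree x = 1 := by
  simp [LF]

lemma mem_reach_of_mem_support {u v x y : V} (p : G.Walk v x) (hp : p.IsPath)
    (hu : u ∉ p.support) (hy : y ∈ p.support) : y ∈ Reach G u v :=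
  ⟨p.takeUntil y hy, hp.takeUntil _, fun h => hu ((p.support_takeUntil_subset hy) h)⟩

lemma self_mem_reach {u v : V} (huv : u ≠ v) : v ∈ Reach G u v :=
  ⟨Walk.nil, Walk.IsPath.nil, by simp [huv]⟩

lemma self_not_mem_reach {v w : V} : v ∉ Reach G v w := by
  rintro ⟨p, -, hv⟩
  exact hv p.end_mem_support

lemma adj_not_mem_reach (hA : G.IsAcyclic) {u v w : V} (huv : G.Adj u v)
    (hvw : G.Adj v w) (hwu : w ≠ u) : u ∉ Reach G v w := by
  rintro ⟨q, hq, hvq⟩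
  have hp2 : (Walk.cons hvw q).IsPath := by
    rw [Walk.cons_isPath_iff]; exact ⟨hq, hvq⟩
  have hp1 : (Walk.cons huv.symm Walk.nil).IsPath := by
    simp [Walk.isPath_def, huv.ne']
  have heq := hA.path_unique ⟨Walk.cons huv.symm Walk.nil, hp1⟩ ⟨Walk.cons hvw q, hp2⟩
  have hlen := congrArg (fun p : G.Path v u => (p : G.Walk v u).length) heq
  simp [Walk.length_cons] at hlen
  exact hwu (q.eq_of_length_eq_zero (Walk.nil_iff_length_eq.mp hlen))

lemma reach_subset (hA : G.IsAcyclic) {u v w : V} (huv : G.Adj u v)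
    (hvw : G.Adj v w) (hwu : w ≠ u) : Reach G v w ⊆ Reach G u v := by
  rintro x ⟨q, hq, hvq⟩
  have huq : u ∉ q.support := fun h =>
    adj_not_mem_reach hA huv hvw hwu (mem_reach_of_mem_support q hq hvq h)
  exact ⟨Walk.cons hvw q, by rw [Walk.cons_isPath_iff]; exact ⟨hq, hvq⟩,
    by simp [Walk.support_cons, huv.ne, huq]⟩

lemma nbhd_eq_singleton {x y : V} (h : G.degree x = 1) (hadj : G.Adj x y) :
    G.neighborFinset x = {y} := by
  rw [← G.card_neighborFinset_eq_degree] at h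
  obtain ⟨b, hb⟩ := Finset.card_eq_one.mp h
  have : y ∈ G.neighborFinset x := by rwa [mem_neighborFinset]
  rw [hb] at this ⊢
  simp_all

/-- The key recursive lemma: there is a path from `v` (entered from `u`) to a leaf whose
product of (degree - 1) over all vertices except the final leaf bounds the number of
reachable leaves. -/
lemma key (hA : G.IsAcyclic) :
    ∀ n : ℕ, ∀ u v : V, G.Adj u v → (Reach G u v).ncard ≤ n →
    ∃ (l : V) (p : G.Walk v l), p.IsPath ∧ u ∉ p.support ∧ G.degree l = 1 ∧
      (LF G u v).card ≤ ∏ w ∈ p.support.toFinset \ {l}, (G.degree w - 1) := by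
  intro n
  induction n with
  | zero =>
    intro u v huv hn
    exfalso
    have : 0 < (Reach G u v).ncard :=
      (Set.ncard_pos (Set.toFinite _)).mpr ⟨v, self_mem_reach huv.ne⟩
    omega
  | succ n ih =>
    intro u v huv hn
    by_cases h1 : G.degree v = 1
    · refine ⟨v, Walk.nil, Walk.IsPath.nil, by simp [huv.ne], h1, ?_⟩
      have hsub : LF G u v ⊆ {v} := by
        intro x hx
        obtain ⟨⟨p, hp, hup⟩, -⟩ := mem_LF.mp hx
        cases p with
        | nil => simp
        | @cons _ z _ h' q =>
          exfalso
          have hz : z ∈ G.neighborFinset v := by rwa [mem_neighborFinset]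
          rw [nbhd_eq_singleton h1 huv.symm] at hz
          have : z = u := by simpa using hz
          apply hup
          rw [Walk.support_cons]
          exact List.mem_cons_of_mem _ (this ▸ q.start_mem_support)
      calc (LF G u v).card ≤ ({v} : Finset V).card := Finset.card_le_card hsub
        _ = 1 := Finset.card_singleton v
        _ ≤ _ := by simp
    · -- v is internal
      have hdeg2 : 2 ≤ G.degree v := by
        have : 0 < G.degree v := by
          rw [G.degree_pos_iff_exists_adj]; exact ⟨u, huv.symm⟩
        omega
      set N : Finset V := G.neighborFinset v \ {u} with hN
      have hNcard : N.card = G.degree v - 1 := by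
        rw [hN, Finset.card_sdiff_of_subset (by simp [mem_neighborFinset, huv.symm]),
          G.card_neighborFinset_eq_degree]
        simp
      have hNne : N.Nonempty := Finset.card_pos.mp (by omega)
      have hNadj : ∀ w ∈ N, G.Adj v w ∧ w ≠ u := by
        intro w hw
        rw [hN, Finset.mem_sdiff, mem_neighborFinset] at hw
        simpa using hw
      -- each branch has strictly smaller reach
      have hrec : ∀ w ∈ N, ∃ (l : V) (p : G.Walk w l), p.IsPath ∧ v ∉ p.support ∧
          G.degree l = 1 ∧
          (LF G v w).card ≤ ∏ x ∈ p.support.toFinset \ {l}, (G.degree x - 1) := by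
        intro w hw
        obtain ⟨hvw, hwu⟩ := hNadj w hw
        have hss : Reach G v w ⊂ Reach G u v :=
          ⟨reach_subset hA huv hvw hwu, fun hsup =>
            self_not_mem_reach (hsup (self_mem_reach huv.ne))⟩
        have hlt : (Reach G v w).ncard < (Reach G u v).ncard :=
          Set.ncard_lt_ncard hss (Set.toFinite _)
        exact ih v w hvw (by omega)
      -- union bound
      have hunion : LF G u v ⊆ N.biUnion (fun w => LF G v w) := by
        intro x hx
        obtain ⟨⟨p, hp, hup⟩, hx1⟩ := mem_LF.mp hx
        cases p with
        | nil => exact absurd hx1 (by simpa using h1)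
        | @cons _ z _ h' q =>
          rw [Walk.cons_isPath_iff] at hp
          have hzu : z ≠ u := by
            intro h
            apply hup
            rw [Walk.support_cons]
            exact List.mem_cons_of_mem _ (h ▸ q.start_mem_support)
          have hzN : z ∈ N := by
            rw [hN, Finset.mem_sdiff, mem_neighborFinset]
            exact ⟨h', by simpa using hzu⟩
          exact Finset.mem_biUnion.mpr ⟨z, hzN, mem_LF.mpr ⟨⟨q, hp.1, hp.2⟩, hx1⟩⟩
      obtain ⟨w, hwN, hwmax⟩ := Finset.exists_max_image N (fun w => (LF G v w).card) hNne
      obtain ⟨hvw, hwu⟩ := hNadj w hwN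
      obtain ⟨l, p, hp, hvp, hl, hbound⟩ := hrec w hwN
      have hcard : (LF G u v).card ≤ (G.degree v - 1) * (LF G v w).card := by
        calc (LF G u v).card ≤ (N.biUnion (fun w => LF G v w)).card :=
              Finset.card_le_card hunion
          _ ≤ ∑ x ∈ N, (LF G v x).card := Finset.card_biUnion_le
          _ ≤ N.card * (LF G v w).card := by
              rw [← smul_eq_mul]
              exact Finset.sum_le_card_nsmul N _ _ hwmax
          _ = (G.degree v - 1) * (LF G v w).card := by rw [hNcard]
      -- assemble path
      have hup : u ∉ p.support := fun h =>
        adj_not_mem_reach hA huv hvw hwu (mem_reach_of_mem_support p hp hvp h)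
      refine ⟨l, Walk.cons hvw p, by rw [Walk.cons_isPath_iff]; exact ⟨hp, hvp⟩,
        by simp only [Walk.support_cons, List.mem_cons, not_or]; exact ⟨huv.ne, hup⟩, hl, ?_⟩
      have hvl : v ≠ l := fun h => hvp (h ▸ p.end_mem_support)
      have hvnot : v ∉ p.support.toFinset \ {l} := by simp [hvp]
      rw [Walk.support_cons, List.toFinset_cons,
        Finset.insert_sdiff_of_notMem _ (by simp [hvl]),
        Finset.prod_insert hvnot]
      calc (LF G u v).card ≤ (G.degree v - 1) * (LF G v w).card := hcard
        _ ≤ (G.degree v - 1) * ∏ x ∈ p.support.toFinset \ {l}, (G.degree x - 1) :=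
            Nat.mul_le_mul_left _ hbound

lemma prod_lemma (I : Finset V) (d : V → ℕ) (hne : I.Nonempty) (hd : ∀ w ∈ I, 2 ≤ d w) :
    (∏ w ∈ I, (d w - 1)) + 1 ≤ ∏ w ∈ I, d w := by
  induction I using Finset.cons_induction with
  | empty => exact absurd hne (by simp)
  | cons a s ha ihs =>
    rw [Finset.prod_cons, Finset.prod_cons]
    have hda : 2 ≤ d a := hd a (Finset.mem_cons_self a s)
    rcases s.eq_empty_or_nonempty with rfl | hsne
    · simp; omega
    · have ihs' := ihs hsne (fun w hw => hd w (Finset.mem_cons_of_mem hw))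
      set A := ∏ w ∈ s, (d w - 1)
      set B := ∏ w ∈ s, d w
      obtain ⟨c, hc⟩ : ∃ c, d a = c + 1 ∧ 1 ≤ c := ⟨d a - 1, by omega, by omega⟩
      obtain ⟨hc1, hc2⟩ := hc
      have h1 : c * A + c ≤ c * B := by
        have h := Nat.mul_le_mul_left c ihs'
        rw [Nat.mul_add, Nat.mul_one] at h
        exact h
      have hB1 : 1 ≤ B := Nat.one_le_iff_ne_zero.mpr (by
        intro h
        obtain ⟨x, hx, hx0⟩ := Finset.prod_eq_zero_iff.mp h
        have := hd x (Finset.mem_cons_of_mem hx); omega)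
      have hda1 : d a - 1 = c := by omega
      rw [hda1, hc1]
      calc c * A + 1 ≤ c * A + c := by omega
        _ ≤ c * B := h1
        _ ≤ c * B + B := by omega
        _ = (c + 1) * B := by ring

lemma self_le_exp_div (x : ℝ) : x ≤ Real.exp (x / Real.exp 1) := by
  have h := Real.add_one_le_exp (x / Real.exp 1 - 1)
  have he : (0:ℝ) < Real.exp 1 := Real.exp_pos 1
  have h2 : Real.exp (x / Real.exp 1 - 1) * Real.exp 1 = Real.exp (x / Real.exp 1) := by
    rw [← Real.exp_add]; ring_nf
  nlinarith [mul_le_mul_of_nonneg_right h he.le, div_mul_cancel₀ x he.ne']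

end Stmt3Aux
/-- In a finite tree with at least three vertices in which the interior degree sum of every
leaf-to-leaf path is at most `M`, the number of leaves is at most `e^(M/e)`. -/
theorem stmt3 {V : Type*} [Fintype V] [DecidableEq V] (G : SimpleGraph V)
    [DecidableRel G.Adj] (hT : G.IsTree) (h3 : 3 ≤ Fintype.card V) (M : ℝ) (hM : 0 < M)
    (hpaths : ∀ ⦃a b : V⦄ (p : G.Walk a b), p.IsPath → G.degree a = 1 → G.degree b = 1 →
      ∑ v ∈ p.support.toFinset \ {a, b}, (G.degree v : ℝ) ≤ M) :
    ((Finset.univ.filter (fun v => G.degree v = 1)).card : ℝ)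
      ≤ Real.exp (M / Real.exp 1) := by
  set L := Finset.univ.filter (fun v => G.degree v = 1) with hLdef
  by_cases hL1 : L.card ≤ 1
  · calc (L.card : ℝ) ≤ 1 := by exact_mod_cast hL1
      _ ≤ Real.exp (M / Real.exp 1) := Real.one_le_exp (by positivity)
  · push_neg at hL1
    obtain ⟨a, ha⟩ := Finset.card_pos.mp (by omega : 0 < L.card)
    have hdega : G.degree a = 1 := by
      have := Finset.mem_filter.mp ha; exact this.2
    obtain ⟨v1, hv1⟩ : ∃ y, G.neighborFinset a = {y} := Finset.card_eq_one.mp (by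
      rw [G.card_neighborFinset_eq_degree]; exact hdega)
    have hadj : G.Adj a v1 := by rw [← mem_neighborFinset, hv1]; simp
    -- every leaf other than `a` is reachable from `v1` avoiding `a`
    have hsub : L.erase a ⊆ Stmt3Aux.LF G a v1 := by
      intro x hx
      obtain ⟨hxa, hxL⟩ := Finset.mem_erase.mp hx
      have hxdeg : G.degree x = 1 := (Finset.mem_filter.mp hxL).2
      obtain ⟨q⟩ := hT.isConnected.preconnected a x
      obtain ⟨p0, hp0⟩ := q.toPath
      cases p0 with
      | nil => exact absurd rfl hxa
      | @cons _ z _ h' r =>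
        have hz : z = v1 := by
          have : z ∈ G.neighborFinset a := by rwa [mem_neighborFinset]
          rw [hv1] at this; simpa using this
        subst hz
        rw [SimpleGraph.Walk.cons_isPath_iff] at hp0
        exact Stmt3Aux.mem_LF.mpr ⟨⟨r, hp0.1, hp0.2⟩, hxdeg⟩
    -- `v1` is an internal vertex
    have hv1pos : 0 < G.degree v1 := by
      rw [G.degree_pos_iff_exists_adj]; exact ⟨a, hadj.symm⟩
    have hv1deg : 2 ≤ G.degree v1 := by
      by_contra hcon
      push_neg at hcon
      have h1' : G.degree v1 = 1 := by omega
      have hcard2 : ({a, v1} : Finset V).card ≤ 2 :=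
        (Finset.card_insert_le _ _).trans (by simp)
      have hnsub : ¬ (Finset.univ : Finset V) ⊆ {a, v1} := fun hsub' => by
        have := Finset.card_le_card hsub'
        rw [Finset.card_univ] at this; omega
      obtain ⟨z, -, hz⟩ := Finset.not_subset.mp hnsub
      simp only [Finset.mem_insert, Finset.mem_singleton, not_or] at hz
      obtain ⟨q⟩ := hT.isConnected.preconnected v1 z
      obtain ⟨p0, hp0⟩ := q.toPath
      cases p0 with
      | nil => exact hz.2 rfl
      | @cons _ z1 _ h' r =>
        rw [SimpleGraph.Walk.cons_isPath_iff] at hp0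
        have hz1 : z1 = a := by
          have : z1 ∈ G.neighborFinset v1 := by rwa [mem_neighborFinset]
          rw [Stmt3Aux.nbhd_eq_singleton h1' hadj.symm] at this; simpa using this
        cases r with
        | nil => exact hz.1 hz1
        | @cons _ z2 _ h'' s =>
          have hz2 : z2 = v1 := by
            have hmem : z2 ∈ G.neighborFinset a := by
              rw [← hz1]; rwa [mem_neighborFinset]
            rw [hv1] at hmem; simpa using hmem
          apply hp0.2
          rw [SimpleGraph.Walk.support_cons]
          exact List.mem_cons_of_mem _ (hz2 ▸ s.start_mem_support)
    -- apply the key lemma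
    obtain ⟨l, p, hp, hap, hl, hbound⟩ :=
      Stmt3Aux.key hT.IsAcyclic (Set.ncard (Stmt3Aux.Reach G a v1)) a v1 hadj le_rfl
    set I := p.support.toFinset \ {l} with hIdef
    have hv1l : v1 ≠ l := fun h => by rw [h, hl] at hv1deg; omega
    have hv1I : v1 ∈ I := by
      rw [hIdef, Finset.mem_sdiff, List.mem_toFinset]
      exact ⟨p.start_mem_support, by simpa using hv1l⟩
    have hla : l ≠ a := fun h => hap (h ▸ p.end_mem_support)
    -- counting
    have hcount : L.card - 1 ≤ ∏ w ∈ I, (G.degree w - 1) := by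
      calc L.card - 1 = (L.erase a).card := (Finset.card_erase_of_mem ha).symm
        _ ≤ (Stmt3Aux.LF G a v1).card := Finset.card_le_card hsub
        _ ≤ _ := hbound
    have hd2 : ∀ w ∈ I, 2 ≤ G.degree w := by
      intro w hw
      by_contra hcon
      push_neg at hcon
      have hw0 : G.degree w - 1 = 0 := by omega
      have hzero : ∏ w ∈ I, (G.degree w - 1) = 0 := Finset.prod_eq_zero hw hw0
      rw [hzero] at hcount
      omega
    have hPP := Stmt3Aux.prod_lemma I (G.degree ·) ⟨v1, hv1I⟩ hd2
    have hLprod : L.card ≤ ∏ w ∈ I, G.degree w := by omega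
    -- the full leaf-to-leaf path
    have hp' : (SimpleGraph.Walk.cons hadj p).IsPath := by
      rw [SimpleGraph.Walk.cons_isPath_iff]; exact ⟨hp, hap⟩
    have hI : (SimpleGraph.Walk.cons hadj p).support.toFinset \ {a, l} = I := by
      ext y
      simp only [hIdef, SimpleGraph.Walk.support_cons, List.toFinset_cons, Finset.mem_sdiff,
        Finset.mem_insert, List.mem_toFinset, Finset.mem_singleton]
      constructor
      · rintro ⟨hy1 | hy1, hy2⟩
        · exact absurd (Or.inl hy1) hy2
        · exact ⟨hy1, fun h => hy2 (Or.inr h)⟩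
      · rintro ⟨hy1, hy2⟩
        refine ⟨Or.inr hy1, ?_⟩
        rintro (rfl | rfl)
        · exact hap hy1
        · exact hy2 rfl
    have hsum : ∑ w ∈ I, (G.degree w : ℝ) ≤ M := by
      have := hpaths (SimpleGraph.Walk.cons hadj p) hp' hdega hl
      rwa [hI] at this
    have hepos : (0:ℝ) < Real.exp 1 := Real.exp_pos 1
    calc (L.card : ℝ) ≤ ((∏ w ∈ I, G.degree w : ℕ) : ℝ) := by exact_mod_cast hLprod
      _ = ∏ w ∈ I, (G.degree w : ℝ) := by push_cast; ring
      _ ≤ ∏ w ∈ I, Real.exp ((G.degree w : ℝ) / Real.exp 1) :=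
          Finset.prod_le_prod (fun w _ => by positivity)
            (fun w _ => Stmt3Aux.self_le_exp_div _)
      _ = Real.exp (∑ w ∈ I, (G.degree w : ℝ) / Real.exp 1) := (Real.exp_sum _ _).symm
      _ = Real.exp ((∑ w ∈ I, (G.degree w : ℝ)) / Real.exp 1) := by rw [Finset.sum_div]
      _ ≤ Real.exp (M / Real.exp 1) := by
          apply Real.exp_le_exp.mpr
          exact div_le_div_of_nonneg_right hsum hepos.le
end

section
/- Let T be a finite tree with at least three vertices such that for every path connecting two leaves of T, the sum of the degrees of the interior vertices of the path is at most M. Then T has at most (M/2 + 1)·e^(M/e) vertices. -/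
open SimpleGraph Finset

section Aux

variable {V : Type*} [Fintype V] [DecidableEq V] {G : SimpleGraph V} [DecidableRel G.Adj]

/-- The unique path between two vertices of a tree. -/
noncomputable def treePath (hT : G.IsTree) (r v : V) : G.Path r v :=
  ⟨(hT.existsUnique_path r v).exists.choose, (hT.existsUnique_path r v).exists.choose_spec⟩

lemma treePath_unique (hT : G.IsTree) {r v : V} (p : G.Walk r v) (hp : p.IsPath) :
    p = (treePath hT r v).1 :=
  (hT.existsUnique_path r v).unique hp (treePath hT r v).2

lemma treePath_takeUntil (hT : G.IsTree) {r v w : V}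
    (h : v ∈ (treePath hT r w).1.support) :
    (treePath hT r w).1.takeUntil v h = (treePath hT r v).1 :=
  treePath_unique hT _ ((treePath hT r w).2.takeUntil h)

lemma treePath_support_mono (hT : G.IsTree) {r v w : V}
    (h : v ∈ (treePath hT r w).1.support) :
    (treePath hT r v).1.support ⊆ (treePath hT r w).1.support := by
  rw [← treePath_takeUntil hT h]
  exact Walk.support_takeUntil_subset _ h

lemma degree_pos_of_tree (hT : G.IsTree) (h2 : 2 ≤ Fintype.card V) (v : V) :
    0 < G.degree v := by
  obtain ⟨u, hu⟩ := Fintype.exists_ne_of_one_lt_card (by omega) v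
  obtain ⟨p⟩ := hT.isConnected.preconnected v u
  obtain ⟨w, h, _, _⟩ := Walk.exists_eq_cons_of_ne (Ne.symm hu) p
  exact G.degree_pos_iff_exists_adj v |>.2 ⟨w, h⟩

/-- An interior vertex of a path has degree at least 2. -/
lemma two_le_degree_interior {a b v : V} (p : G.Walk a b) (hp : p.IsPath)
    (hv : v ∈ p.support) (hva : v ≠ a) (hvb : v ≠ b) : 2 ≤ G.degree v := by
  have hspec := p.take_spec hv
  set q1 := p.takeUntil v hv with hq1
  set q2 := p.dropUntil v hv with hq2
  obtain ⟨x1, hx1, t1, ht1⟩ := Walk.exists_eq_cons_of_ne hva q1.reverse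
  obtain ⟨x2, hx2, t2, ht2⟩ := Walk.exists_eq_cons_of_ne hvb q2
  have hx1mem : x1 ∈ q1.support := by
    have : x1 ∈ q1.reverse.support := by rw [ht1]; simp
    rwa [Walk.support_reverse, List.mem_reverse] at this
  have hx2mem : x2 ∈ q2.support.tail := by
    rw [ht2, Walk.support_cons]
    exact t2.start_mem_support
  have hnd : (q1.support ++ q2.support.tail).Nodup := by
    rw [← Walk.support_append, hspec]; exact hp.support_nodup
  have hne : x1 ≠ x2 := fun h =>
    (List.disjoint_of_nodup_append hnd) hx1mem (h ▸ hx2mem)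
  have hsub : ({x1, x2} : Finset V) ⊆ G.neighborFinset v := by
    intro x hx
    simp only [Finset.mem_insert, Finset.mem_singleton] at hx
    rcases hx with rfl | rfl
    · exact (G.mem_neighborFinset v x).2 hx1
    · exact (G.mem_neighborFinset v x).2 hx2
  calc 2 = ({x1, x2} : Finset V).card := (Finset.card_pair hne).symm
    _ ≤ (G.neighborFinset v).card := Finset.card_le_card hsub
    _ = G.degree v := rfl

lemma concat_isPath {u v w : V} {p : G.Walk u v} (hp : p.IsPath) (h : G.Adj v w)
    (hw : w ∉ p.support) : (p.concat h).IsPath := by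
  have h1 : (Walk.cons h.symm p.reverse).IsPath := by
    rw [Walk.cons_isPath_iff]
    refine ⟨hp.reverse, ?_⟩
    rwa [Walk.support_reverse, List.mem_reverse]
  have h2 := h1.reverse
  rwa [Walk.reverse_cons, Walk.reverse_reverse, ← Walk.concat_eq_append] at h2

lemma treePath_child (hT : G.IsTree) {r v u : V} (h : G.Adj v u)
    (hu : u ∉ (treePath hT r v).1.support) :
    (treePath hT r u).1 = (treePath hT r v).1.concat h :=
  (treePath_unique hT _ (concat_isPath (treePath hT r v).2 h hu)).symm

lemma treePath_child_support (hT : G.IsTree) {r v u : V} (h : G.Adj v u)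
    (hu : u ∉ (treePath hT r v).1.support) :
    (treePath hT r u).1.support = (treePath hT r v).1.support ++ [u] := by
  rw [treePath_child hT h hu, Walk.support_concat]

lemma treePath_child_length (hT : G.IsTree) {r v u : V} (h : G.Adj v u)
    (hu : u ∉ (treePath hT r v).1.support) :
    (treePath hT r u).1.length = (treePath hT r v).1.length + 1 := by
  rw [treePath_child hT h hu, Walk.length_concat]

/-- In a tree, a vertex of degree at least 2 has a neighbor off its path from `r`. -/
lemma exists_neighbor_not_mem (hT : G.IsTree) {r v : V} (hdeg : 2 ≤ G.degree v) :
    ∃ w, G.Adj v w ∧ w ∉ (treePath hT r v).1.support := by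
  by_contra hcon
  push_neg at hcon
  set p := (treePath hT r v).1 with hpdef
  have key : ∀ w, G.Adj v w → w ∈ p.support →
      some w = (p.support.dropLast).reverse.head? := by
    intro w h hw
    have hwv : w ≠ v := h.ne'
    have he : (Walk.cons h.symm Walk.nil : G.Walk w v).IsPath := by
      rw [Walk.cons_isPath_iff]
      exact ⟨Walk.IsPath.nil, by simp [hwv]⟩
    have hd : p.dropUntil w hw = Walk.cons h.symm Walk.nil := by
      have := hT.IsAcyclic.path_unique
        ⟨p.dropUntil w hw, (treePath hT r v).2.dropUntil hw⟩ ⟨_, he⟩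
      exact congrArg Subtype.val this
    have hsupp : p.support = (p.takeUntil w hw).support ++ [v] := by
      conv_lhs => rw [← p.take_spec hw]
      rw [Walk.support_append, hd]
      rfl
    have hdl : p.support.dropLast = (p.takeUntil w hw).support := by
      rw [hsupp, List.dropLast_concat]
    have hlast : (p.takeUntil w hw).support.reverse.head? = some w := by
      have h1 : ((p.takeUntil w hw).reverse).support
          = w :: ((p.takeUntil w hw).reverse).support.tail :=
        Walk.support_eq_cons _
      rw [Walk.support_reverse] at h1
      rw [h1]
      rfl
    rw [hdl, hlast]
  have h2 : 1 < (G.neighborFinset v).card := hdeg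
  obtain ⟨w1, hw1, w2, hw2, hne⟩ := Finset.one_lt_card.1 h2
  rw [G.mem_neighborFinset] at hw1 hw2
  have e1 := key w1 hw1 (hcon w1 hw1)
  have e2 := key w2 hw2 (hcon w2 hw2)
  rw [← e2] at e1
  exact hne (Option.some_injective _ e1)

lemma prod_pred_add_one_le (T : Finset V) (f : V → ℕ) (hne : T.Nonempty)
    (h2 : ∀ x ∈ T, 2 ≤ f x) : (∏ x ∈ T, (f x - 1)) + 1 ≤ ∏ x ∈ T, f x := by
  obtain ⟨a, ha⟩ := hne
  rw [← Finset.insert_erase ha, Finset.prod_insert (Finset.notMem_erase a T),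
    Finset.prod_insert (Finset.notMem_erase a T)]
  have hP : ∏ x ∈ T.erase a, (f x - 1) ≤ ∏ x ∈ T.erase a, f x :=
    Finset.prod_le_prod' fun i _ => Nat.sub_le _ _
  have h1 : 1 ≤ ∏ x ∈ T.erase a, (f x - 1) :=
    Finset.one_le_prod' fun i hi => by
      have := h2 i (Finset.mem_of_mem_erase hi); omega
  have hfa : 2 ≤ f a := h2 a ha
  calc (f a - 1) * ∏ x ∈ T.erase a, (f x - 1) + 1
      ≤ (f a - 1) * ∏ x ∈ T.erase a, (f x - 1) + ∏ x ∈ T.erase a, (f x - 1) := by omega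
    _ = ((f a - 1) + 1) * ∏ x ∈ T.erase a, (f x - 1) := by ring
    _ = f a * ∏ x ∈ T.erase a, (f x - 1) := by
        rw [Nat.sub_add_cancel (by omega)]
    _ ≤ f a * ∏ x ∈ T.erase a, f x := Nat.mul_le_mul_left _ hP

lemma real_le_exp_div (x : ℝ) : x ≤ Real.exp (x / Real.exp 1) := by
  have h := Real.add_one_le_exp (x / Real.exp 1 - 1)
  rw [sub_add_cancel, Real.exp_sub] at h
  have he : (0 : ℝ) < Real.exp 1 := Real.exp_pos 1
  calc x = x / Real.exp 1 * Real.exp 1 := by field_simp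
    _ ≤ Real.exp (x / Real.exp 1) / Real.exp 1 * Real.exp 1 := by
        apply mul_le_mul_of_nonneg_right h he.le
    _ = Real.exp (x / Real.exp 1) := by field_simp

/-- The key induction: counting leaves below a vertex by the product of `degree - 1`
along the path down to a suitable leaf. -/
lemma leaves_below_le (hT : G.IsTree) (h2 : 2 ≤ Fintype.card V) (r : V) :
    ∀ (k : ℕ) (v : V), v ≠ r → Fintype.card V ≤ (treePath hT r v).1.length + k →
    ∃ ℓ, G.degree ℓ = 1 ∧ v ∈ (treePath hT r ℓ).1.support ∧
      (univ.filter (fun w => G.degree w = 1 ∧ v ∈ (treePath hT r w).1.support)).card ≤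
        ∏ u ∈ (insert v ((treePath hT r ℓ).1.support.toFinset \
            (treePath hT r v).1.support.toFinset)).erase ℓ, (G.degree u - 1) := by
  intro k
  induction k with
  | zero =>
    intro v _ hcard
    exfalso
    have h1 : (treePath hT r v).1.support.length ≤ Fintype.card V :=
      (treePath hT r v).2.support_nodup.length_le_card
    rw [Walk.length_support] at h1
    omega
  | succ k ih =>
    intro v hvr hcard
    by_cases hdeg : G.degree v = 1
    · refine ⟨v, hdeg, Walk.end_mem_support _, ?_⟩
      have hsingle : (univ.filter (fun w => G.degree w = 1 ∧
          v ∈ (treePath hT r w).1.support)) ⊆ {v} := by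
        intro w hw
        simp only [Finset.mem_filter, Finset.mem_univ, true_and] at hw
        simp only [Finset.mem_singleton]
        by_contra hwv
        have := two_le_degree_interior (treePath hT r w).1 (treePath hT r w).2
          hw.2 hvr (fun h => hwv h.symm)
        omega
      calc (univ.filter (fun w => G.degree w = 1 ∧
            v ∈ (treePath hT r w).1.support)).card ≤ ({v} : Finset V).card :=
          Finset.card_le_card hsingle
        _ = 1 := Finset.card_singleton v
        _ ≤ _ := by
          simp
    · -- v is not a leaf
      have hd2 : 2 ≤ G.degree v := by
        have := degree_pos_of_tree hT h2 v; omega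
      obtain ⟨w0, hw0adj, hw0mem⟩ := exists_neighbor_not_mem hT (r := r) hd2
      set C : Finset V :=
        univ.filter (fun u => G.Adj v u ∧ u ∉ (treePath hT r v).1.support) with hC
      have hw0C : w0 ∈ C := by simp [hC, hw0adj, hw0mem]
      have hCne : C.Nonempty := ⟨w0, hw0C⟩
      -- for each child u in C, apply the induction hypothesis
      have hchild : ∀ u ∈ C, u ≠ r ∧
          Fintype.card V ≤ (treePath hT r u).1.length + k := by
        intro u hu
        simp only [hC, Finset.mem_filter, Finset.mem_univ, true_and] at hu
        constructor
        · rintro rfl; exact hu.2 (Walk.start_mem_support _)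
        · rw [treePath_child_length hT hu.1 hu.2]; omega
      have IH : ∀ u ∈ C, ∃ ℓ, G.degree ℓ = 1 ∧ u ∈ (treePath hT r ℓ).1.support ∧
          (univ.filter (fun w => G.degree w = 1 ∧
            u ∈ (treePath hT r w).1.support)).card ≤
          ∏ x ∈ (insert u ((treePath hT r ℓ).1.support.toFinset \
              (treePath hT r u).1.support.toFinset)).erase ℓ, (G.degree x - 1) := by
        intro u hu
        exact ih u (hchild u hu).1 (hchild u hu).2
      choose! f hf1 hf2 hf3 using IH
      -- the value each child contributes
      set B : V → ℕ := fun u =>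
        ∏ x ∈ (insert u ((treePath hT r (f u)).1.support.toFinset \
            (treePath hT r u).1.support.toFinset)).erase (f u), (G.degree x - 1) with hB
      obtain ⟨u₀, hu₀C, hu₀max⟩ := Finset.exists_max_image C B hCne
      set ℓ := f u₀ with hℓ
      have hu₀adj : G.Adj v u₀ ∧ u₀ ∉ (treePath hT r v).1.support := by
        simpa [hC] using hu₀C
      have hℓ1 : G.degree ℓ = 1 := hf1 u₀ hu₀C
      have hu₀ℓ : u₀ ∈ (treePath hT r ℓ).1.support := hf2 u₀ hu₀C
      -- v is on the path to ℓ
      have hvu₀ : v ∈ (treePath hT r u₀).1.support := by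
        rw [treePath_child_support hT hu₀adj.1 hu₀adj.2]
        simp [Walk.end_mem_support]
      have hvℓ : v ∈ (treePath hT r ℓ).1.support :=
        treePath_support_mono hT hu₀ℓ hvu₀
      refine ⟨ℓ, hℓ1, hvℓ, ?_⟩
      have hvℓne : v ≠ ℓ := by rintro rfl; omega
      -- abbreviations for supports as finsets
      set Sv := (treePath hT r v).1.support.toFinset with hSv
      set Su := (treePath hT r u₀).1.support.toFinset with hSu
      set Sl := (treePath hT r ℓ).1.support.toFinset with hSl
      have hSuEq : Su = insert u₀ Sv := by
        rw [hSu, hSv, treePath_child_support hT hu₀adj.1 hu₀adj.2]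
        ext x; simp [or_comm]
      have hSvSu : Sv ⊆ Su := by rw [hSuEq]; exact Finset.subset_insert _ _
      have hu₀Sl : u₀ ∈ Sl := by rw [hSl]; simpa using hu₀ℓ
      have hu₀Sv : u₀ ∉ Sv := by rw [hSv]; simpa using hu₀adj.2
      have hvSv : v ∈ Sv := by rw [hSv]; simp [Walk.end_mem_support]
      have hrSv : r ∈ Sv := by rw [hSv]; simp [Walk.start_mem_support]
      -- step 1 : leaves below v are covered by leaves below children
      have hcover : (univ.filter (fun w => G.degree w = 1 ∧
          v ∈ (treePath hT r w).1.support)) ⊆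
          C.biUnion (fun u => univ.filter (fun w => G.degree w = 1 ∧
            u ∈ (treePath hT r w).1.support)) := by
        intro w hw
        simp only [Finset.mem_filter, Finset.mem_univ, true_and] at hw
        obtain ⟨hwleaf, hvw⟩ := hw
        have hwv : w ≠ v := by rintro rfl; omega
        obtain ⟨u', hu'adj, t, ht⟩ :=
          Walk.exists_eq_cons_of_ne (fun h => hwv h.symm)
            ((treePath hT r w).1.dropUntil v hvw)
        have htake : (treePath hT r w).1.takeUntil v hvw = (treePath hT r v).1 :=
          treePath_takeUntil hT hvw
        have hnd : ((treePath hT r w).1.takeUntil v hvw).support.Nodup ∧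
            List.Disjoint ((treePath hT r w).1.takeUntil v hvw).support
              ((treePath hT r w).1.dropUntil v hvw).support.tail := by
          have h0 : (((treePath hT r w).1.takeUntil v hvw).support ++
              ((treePath hT r w).1.dropUntil v hvw).support.tail).Nodup := by
            rw [← Walk.support_append, Walk.take_spec]
            exact (treePath hT r w).2.support_nodup
          exact ⟨(List.nodup_append.1 h0).1, List.disjoint_of_nodup_append h0⟩
        have hu'tail : u' ∈ ((treePath hT r w).1.dropUntil v hvw).support.tail := by
          rw [ht, Walk.support_cons]
          exact t.start_mem_support
        have hu'nmem : u' ∉ (treePath hT r v).1.support := by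
          rw [← htake]
          exact fun hmem => (hnd.2 hmem hu'tail)
        have hu'C : u' ∈ C := by simp [hC, hu'adj, hu'nmem]
        have hu'w : u' ∈ (treePath hT r w).1.support :=
          Walk.support_dropUntil_subset _ hvw
            (by rw [ht, Walk.support_cons]; exact List.mem_cons_of_mem _ t.start_mem_support)
        exact Finset.mem_biUnion.2 ⟨u', hu'C, by simp [hwleaf, hu'w]⟩
      -- step 2 : cardinality chain
      have hstep2 : (univ.filter (fun w => G.degree w = 1 ∧
          v ∈ (treePath hT r w).1.support)).card ≤ C.card * B u₀ := by
        calc (univ.filter (fun w => G.degree w = 1 ∧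
              v ∈ (treePath hT r w).1.support)).card
            ≤ (C.biUnion (fun u => univ.filter (fun w => G.degree w = 1 ∧
                u ∈ (treePath hT r w).1.support))).card := Finset.card_le_card hcover
          _ ≤ ∑ u ∈ C, (univ.filter (fun w => G.degree w = 1 ∧
                u ∈ (treePath hT r w).1.support)).card := Finset.card_biUnion_le
          _ ≤ ∑ u ∈ C, B u := Finset.sum_le_sum (fun u hu => hf3 u hu)
          _ ≤ C.card * B u₀ := by
              have := Finset.sum_le_card_nsmul C B (B u₀) (fun x hx => hu₀max x hx)
              simpa [smul_eq_mul] using this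
      -- step 3 : C.card ≤ degree v - 1 (the parent is a neighbor not in C)
      obtain ⟨p₀, hp₀adj, t₀, ht₀⟩ :=
        Walk.exists_eq_cons_of_ne hvr (treePath hT r v).1.reverse
      have hp₀mem : p₀ ∈ (treePath hT r v).1.support := by
        have : p₀ ∈ (treePath hT r v).1.reverse.support := by
          rw [ht₀, Walk.support_cons]
          exact List.mem_cons_of_mem _ t₀.start_mem_support
        rwa [Walk.support_reverse, List.mem_reverse] at this
      have hCcard : C.card ≤ G.degree v - 1 := by
        have hsub : C ⊆ (G.neighborFinset v).erase p₀ := by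
          intro u hu
          simp only [hC, Finset.mem_filter, Finset.mem_univ, true_and] at hu
          rw [Finset.mem_erase, G.mem_neighborFinset]
          exact ⟨fun h => hu.2 (h ▸ hp₀mem), hu.1⟩
        calc C.card ≤ ((G.neighborFinset v).erase p₀).card := Finset.card_le_card hsub
          _ = G.degree v - 1 := by
              rw [Finset.card_erase_of_mem ((G.mem_neighborFinset v p₀).2 hp₀adj)]
              rfl
      -- step 4 : index sets
      set A := (insert v (Sl \ Sv)).erase ℓ with hA
      set Au := (insert u₀ (Sl \ Su)).erase ℓ with hAu
      have hvA : v ∈ A := by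
        rw [hA, Finset.mem_erase]
        exact ⟨hvℓne, Finset.mem_insert_self _ _⟩
      have hAuA : Au ⊆ A := by
        intro x hx
        rw [hAu, Finset.mem_erase] at hx
        rw [hA, Finset.mem_erase]
        refine ⟨hx.1, ?_⟩
        rcases Finset.mem_insert.1 hx.2 with rfl | hx2
        · exact Finset.mem_insert_of_mem (Finset.mem_sdiff.2 ⟨hu₀Sl, hu₀Sv⟩)
        · rw [Finset.mem_sdiff] at hx2
          exact Finset.mem_insert_of_mem
            (Finset.mem_sdiff.2 ⟨hx2.1, fun h => hx2.2 (hSvSu h)⟩)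
      have hvAu : v ∉ Au := by
        rw [hAu, Finset.mem_erase, Finset.mem_insert]
        rintro ⟨-, rfl | hx⟩
        · exact hu₀adj.1.ne rfl
        · exact (Finset.mem_sdiff.1 hx).2 (hSvSu hvSv)
      have hADeg : ∀ x ∈ A, 2 ≤ G.degree x := by
        intro x hx
        rw [hA, Finset.mem_erase] at hx
        rcases Finset.mem_insert.1 hx.2 with rfl | hx2
        · exact hd2
        · rw [Finset.mem_sdiff] at hx2
          have hxS : x ∈ (treePath hT r ℓ).1.support := by
            have := hx2.1; rw [hSl] at this; simpa using this
          have hxr : x ≠ r := fun h => hx2.2 (h ▸ hrSv)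
          exact two_le_degree_interior _ (treePath hT r ℓ).2 hxS hxr hx.1
      -- step 5 : conclude
      have hfinal : C.card * B u₀ ≤ ∏ x ∈ A, (G.degree x - 1) := by
        have hmono : ∏ x ∈ insert v Au, (G.degree x - 1) ≤
            ∏ x ∈ A, (G.degree x - 1) := by
          apply Finset.prod_le_prod_of_subset_of_one_le'
          · intro x hx
            rcases Finset.mem_insert.1 hx with rfl | hx
            · exact hvA
            · exact hAuA hx
          · intro x hx _
            have := hADeg x hx; omega
        have hins : ∏ x ∈ insert v Au, (G.degree x - 1) =
            (G.degree v - 1) * ∏ x ∈ Au, (G.degree x - 1) :=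
          Finset.prod_insert hvAu
        have hBu : B u₀ = ∏ x ∈ Au, (G.degree x - 1) := by
          rw [hB, hAu, hSl, hSu, hℓ]
        calc C.card * B u₀ ≤ (G.degree v - 1) * B u₀ :=
              Nat.mul_le_mul_right _ hCcard
          _ = ∏ x ∈ insert v Au, (G.degree x - 1) := by rw [hBu, ← hins]
          _ ≤ ∏ x ∈ A, (G.degree x - 1) := hmono
      exact hstep2.trans hfinal

end Aux

/-- A finite tree with at least three vertices, in which the interior degree sum of every
leaf-to-leaf path is at most `M`, has at most `(M/2 + 1) · e^(M/e)` vertices. -/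
theorem stmt5 {V : Type*} [Fintype V] [DecidableEq V] (G : SimpleGraph V)
    [DecidableRel G.Adj] (hT : G.IsTree) (h3 : 3 ≤ Fintype.card V) (M : ℝ) (hM : 0 < M)
    (hpaths : ∀ ⦃a b : V⦄ (p : G.Walk a b), p.IsPath → G.degree a = 1 → G.degree b = 1 →
      ∑ v ∈ p.support.toFinset \ {a, b}, (G.degree v : ℝ) ≤ M) :
    (Fintype.card V : ℝ) ≤ (M / 2 + 1) * Real.exp (M / Real.exp 1) := by
  classical
  have h2 : 2 ≤ Fintype.card V := by omega
  -- there is a leaf r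
  obtain ⟨r, hr⟩ : ∃ r : V, G.degree r = 1 := by
    by_contra hno
    push_neg at hno
    have hall : ∀ v : V, 2 ≤ G.degree v := fun v => by
      have := degree_pos_of_tree hT h2 v
      have := hno v
      omega
    have hsum : ∑ v : V, G.degree v = 2 * G.edgeFinset.card :=
      G.sum_degrees_eq_twice_card_edges
    have hec : G.edgeFinset.card + 1 = Fintype.card V := hT.card_edgeFinset
    have hge : 2 * Fintype.card V ≤ ∑ v : V, G.degree v := by
      calc 2 * Fintype.card V = ∑ _v : V, 2 := by
            simp [Finset.sum_const, mul_comm]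
        _ ≤ ∑ v : V, G.degree v := Finset.sum_le_sum (fun v _ => hall v)
    omega
  -- the unique neighbor of r
  obtain ⟨c₀, hc₀⟩ : ∃ c₀, G.neighborFinset r = {c₀} :=
    Finset.card_eq_one.mp hr
  have hadjc₀ : G.Adj r c₀ := by
    rw [← G.mem_neighborFinset, hc₀]; simp
  have hc₀r : c₀ ≠ r := fun h => G.irrefl (h ▸ hadjc₀)
  -- the path from r to r is trivial
  have hsupr : (treePath hT r r).1.support = [r] := by
    have : treePath hT r r = SimpleGraph.Path.nil := SimpleGraph.Path.loop_eq _
    rw [this]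
    rfl
  -- path to c₀
  have hc₀nmem : c₀ ∉ (treePath hT r r).1.support := by
    rw [hsupr]; simp [hc₀r]
  have hsupc₀ : (treePath hT r c₀).1.support = [r, c₀] := by
    rw [treePath_child_support hT hadjc₀ hc₀nmem, hsupr]
    rfl
  -- every vertex other than r has c₀ on its path from r
  have hsecond : ∀ x : V, x ≠ r → c₀ ∈ (treePath hT r x).1.support := by
    intro x hx
    obtain ⟨w, hadj, t, ht⟩ :=
      Walk.exists_eq_cons_of_ne (fun h => hx h.symm) (treePath hT r x).1
    have hw : w = c₀ := by
      have : w ∈ G.neighborFinset r := (G.mem_neighborFinset r w).2 hadj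
      rw [hc₀] at this
      simpa using this
    rw [ht, Walk.support_cons]
    subst hw
    exact List.mem_cons_of_mem _ t.start_mem_support
  -- c₀ has degree at least 2
  have hc₀deg : 2 ≤ G.degree c₀ := by
    obtain ⟨x, hxmem⟩ : ∃ x : V, x ∉ ({r, c₀} : Finset V) := by
      by_contra hcon
      push_neg at hcon
      have : (univ : Finset V) ⊆ {r, c₀} := fun x _ => hcon x
      have hcc := Finset.card_le_card this
      rw [Finset.card_univ] at hcc
      have h22 : ({r, c₀} : Finset V).card ≤ 2 :=
        le_trans (Finset.card_insert_le _ _) (by simp)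
      omega
    simp only [Finset.mem_insert, Finset.mem_singleton, not_or] at hxmem
    exact two_le_degree_interior (treePath hT r x).1 (treePath hT r x).2
      (hsecond x hxmem.1) hc₀r (fun h => hxmem.2 h.symm)
  -- main counting lemma applied at c₀
  obtain ⟨ℓ, hℓ1, hc₀ℓ, hcardprod⟩ :=
    leaves_below_le hT h2 r (Fintype.card V) c₀ hc₀r (Nat.le_add_left _ _)
  have hℓc₀ : c₀ ≠ ℓ := fun h => by rw [h] at hc₀deg; omega
  -- identify the index set with the interior of the path from r to ℓ
  set Sl := (treePath hT r ℓ).1.support.toFinset with hSl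
  have hc₀Sl : c₀ ∈ Sl := by rw [hSl]; simpa using hc₀ℓ
  have hrSl : r ∈ Sl := by rw [hSl]; simp [Walk.start_mem_support]
  have hSc₀ : (treePath hT r c₀).1.support.toFinset = {r, c₀} := by
    rw [hsupc₀]
    ext x; simp
  have hTeq : (insert c₀ (Sl \ (treePath hT r c₀).1.support.toFinset)).erase ℓ
      = Sl \ {r, ℓ} := by
    rw [hSc₀]
    ext x
    simp only [Finset.mem_erase, Finset.mem_insert, Finset.mem_sdiff,
      Finset.mem_singleton, not_or]
    constructor
    · rintro ⟨hxℓ, rfl | ⟨hx1, hx2, hx3⟩⟩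
      · exact ⟨hc₀Sl, hc₀r, hxℓ⟩
      · exact ⟨hx1, hx2, hxℓ⟩
    · rintro ⟨hx1, hx2, hx3⟩
      by_cases hxc : x = c₀
      · exact ⟨hx3, Or.inl hxc⟩
      · exact ⟨hx3, Or.inr ⟨hx1, hx2, hxc⟩⟩
  set T := Sl \ ({r, ℓ} : Finset V) with hTdef
  have hTdeg : ∀ x ∈ T, 2 ≤ G.degree x := by
    intro x hx
    rw [hTdef, Finset.mem_sdiff] at hx
    simp only [Finset.mem_insert, Finset.mem_singleton, not_or] at hx
    have hxS : x ∈ (treePath hT r ℓ).1.support := by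
      have := hx.1; rw [hSl] at this; simpa using this
    exact two_le_degree_interior _ (treePath hT r ℓ).2 hxS hx.2.1 hx.2.2
  have hTne : T.Nonempty := ⟨c₀, by
    rw [hTdef, Finset.mem_sdiff]
    simp only [Finset.mem_insert, Finset.mem_singleton, not_or]
    exact ⟨hc₀Sl, hc₀r, hℓc₀⟩⟩
  -- the number of leaves
  set L := (univ.filter (fun w : V => G.degree w = 1)).card with hL
  have hLeavesSub : (univ.filter (fun w : V => G.degree w = 1)) ⊆
      insert r (univ.filter (fun w => G.degree w = 1 ∧
        c₀ ∈ (treePath hT r w).1.support)) := by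
    intro w hw
    simp only [Finset.mem_filter, Finset.mem_univ, true_and] at hw
    by_cases hwr : w = r
    · simp [hwr]
    · exact Finset.mem_insert_of_mem (by simp [hw, hsecond w hwr])
  have hLbound : L ≤ ∏ x ∈ T, G.degree x := by
    have hL1 : L ≤ 1 + (univ.filter (fun w => G.degree w = 1 ∧
        c₀ ∈ (treePath hT r w).1.support)).card := by
      calc L ≤ (insert r (univ.filter (fun w => G.degree w = 1 ∧
            c₀ ∈ (treePath hT r w).1.support))).card :=
          Finset.card_le_card hLeavesSub
        _ ≤ 1 + _ := by
            rw [add_comm]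
            exact Finset.card_insert_le _ _
    have hL2 : (univ.filter (fun w => G.degree w = 1 ∧
        c₀ ∈ (treePath hT r w).1.support)).card ≤ ∏ x ∈ T, (G.degree x - 1) := by
      rw [← hTeq]
      exact hcardprod
    have hL3 : (∏ x ∈ T, (G.degree x - 1)) + 1 ≤ ∏ x ∈ T, G.degree x :=
      prod_pred_add_one_le T (fun x => G.degree x) hTne hTdeg
    omega
  -- the degree sum over T is at most M
  have hsumT : ∑ x ∈ T, (G.degree x : ℝ) ≤ M := by
    have := hpaths (treePath hT r ℓ).1 (treePath hT r ℓ).2 hr hℓ1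
    rw [hTdef, hSl]
    exact this
  -- hence L ≤ exp (M / e)
  have hLreal : (L : ℝ) ≤ Real.exp (M / Real.exp 1) := by
    have hc1 : (L : ℝ) ≤ ∏ x ∈ T, (G.degree x : ℝ) := by
      have := hLbound
      calc (L : ℝ) ≤ ((∏ x ∈ T, G.degree x : ℕ) : ℝ) := by exact_mod_cast this
        _ = ∏ x ∈ T, (G.degree x : ℝ) := by push_cast; ring
    have hc2 : ∏ x ∈ T, (G.degree x : ℝ) ≤
        ∏ x ∈ T, Real.exp ((G.degree x : ℝ) / Real.exp 1) := by
      apply Finset.prod_le_prod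
      · intro i _; positivity
      · intro i _; exact real_le_exp_div _
    have hc3 : ∏ x ∈ T, Real.exp ((G.degree x : ℝ) / Real.exp 1) =
        Real.exp (∑ x ∈ T, (G.degree x : ℝ) / Real.exp 1) :=
      (Real.exp_sum _ _).symm
    have hc4 : ∑ x ∈ T, (G.degree x : ℝ) / Real.exp 1 =
        (∑ x ∈ T, (G.degree x : ℝ)) / Real.exp 1 := by
      rw [Finset.sum_div]
    have hc5 : Real.exp ((∑ x ∈ T, (G.degree x : ℝ)) / Real.exp 1) ≤
        Real.exp (M / Real.exp 1) := by
      apply Real.exp_le_exp.2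
      exact (div_le_div_iff_of_pos_right (Real.exp_pos 1)).2 hsumT
    calc (L : ℝ) ≤ ∏ x ∈ T, (G.degree x : ℝ) := hc1
      _ ≤ ∏ x ∈ T, Real.exp ((G.degree x : ℝ) / Real.exp 1) := hc2
      _ = Real.exp (∑ x ∈ T, (G.degree x : ℝ) / Real.exp 1) := hc3
      _ = Real.exp ((∑ x ∈ T, (G.degree x : ℝ)) / Real.exp 1) := by rw [hc4]
      _ ≤ Real.exp (M / Real.exp 1) := hc5
  -- covering the vertex set by paths to leaves
  set leaves' := (univ.filter (fun w : V => G.degree w = 1)).erase r with hleaves'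
  have hcover : (univ : Finset V) ⊆ insert r (leaves'.biUnion
      (fun w => (treePath hT r w).1.support.toFinset.erase r)) := by
    intro v _
    by_cases hvr : v = r
    · simp [hvr]
    · obtain ⟨ℓ', hℓ'1, hvℓ', -⟩ :=
        leaves_below_le hT h2 r (Fintype.card V) v hvr (Nat.le_add_left _ _)
      have hℓ'r : ℓ' ≠ r := by
        rintro rfl
        rw [hsupr] at hvℓ'
        simp at hvℓ'
        exact hvr hvℓ'
      apply Finset.mem_insert_of_mem
      apply Finset.mem_biUnion.2
      refine ⟨ℓ', ?_, ?_⟩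
      · rw [hleaves', Finset.mem_erase]
        simp [hℓ'r, hℓ'1]
      · rw [Finset.mem_erase]
        exact ⟨hvr, by simpa using hvℓ'⟩
  -- size of each path piece
  have hpiece : ∀ w ∈ leaves',
      ((((treePath hT r w).1.support.toFinset.erase r).card : ℝ)) ≤ M / 2 + 1 := by
    intro w hw
    rw [hleaves', Finset.mem_erase, Finset.mem_filter] at hw
    obtain ⟨hwr, -, hw1⟩ := hw
    set Sw := (treePath hT r w).1.support.toFinset with hSw
    set I := Sw \ ({r, w} : Finset V) with hI
    have hIdeg : ∀ x ∈ I, 2 ≤ G.degree x := by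
      intro x hx
      rw [hI, Finset.mem_sdiff] at hx
      simp only [Finset.mem_insert, Finset.mem_singleton, not_or] at hx
      have hxS : x ∈ (treePath hT r w).1.support := by
        have := hx.1; rw [hSw] at this; simpa using this
      exact two_le_degree_interior _ (treePath hT r w).2 hxS hx.2.1 hx.2.2
    have hIcard : 2 * I.card ≤ ∑ x ∈ I, G.degree x := by
      calc 2 * I.card = ∑ _x ∈ I, 2 := by simp [mul_comm]
        _ ≤ ∑ x ∈ I, G.degree x := Finset.sum_le_sum hIdeg
    have hIsum : ∑ x ∈ I, (G.degree x : ℝ) ≤ M := by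
      have := hpaths (treePath hT r w).1 (treePath hT r w).2 hr hw1
      rw [hI, hSw]
      exact this
    have hIreal : (I.card : ℝ) ≤ M / 2 := by
      have h1 : (2 * I.card : ℝ) ≤ ∑ x ∈ I, (G.degree x : ℝ) := by
        exact_mod_cast hIcard
      linarith
    have hsub : Sw.erase r ⊆ insert w I := by
      intro x hx
      rw [Finset.mem_erase] at hx
      by_cases hxw : x = w
      · simp [hxw]
      · apply Finset.mem_insert_of_mem
        rw [hI, Finset.mem_sdiff]
        simp only [Finset.mem_insert, Finset.mem_singleton, not_or]
        exact ⟨hx.2, hx.1, hxw⟩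
    have hcard2 : (Sw.erase r).card ≤ I.card + 1 := by
      calc (Sw.erase r).card ≤ (insert w I).card := Finset.card_le_card hsub
        _ ≤ I.card + 1 := Finset.card_insert_le _ _
    have : ((Sw.erase r).card : ℝ) ≤ (I.card : ℝ) + 1 := by exact_mod_cast hcard2
    linarith
  -- put the covering together
  have hncard : (Fintype.card V : ℝ) ≤ 1 + ∑ w ∈ leaves',
      ((((treePath hT r w).1.support.toFinset.erase r).card : ℝ)) := by
    have h1 : Fintype.card V ≤ 1 + ∑ w ∈ leaves',
        ((treePath hT r w).1.support.toFinset.erase r).card := by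
      calc Fintype.card V = (univ : Finset V).card := rfl
        _ ≤ (insert r (leaves'.biUnion
            (fun w => (treePath hT r w).1.support.toFinset.erase r))).card :=
          Finset.card_le_card hcover
        _ ≤ 1 + (leaves'.biUnion
            (fun w => (treePath hT r w).1.support.toFinset.erase r)).card := by
          rw [add_comm]; exact Finset.card_insert_le _ _
        _ ≤ 1 + ∑ w ∈ leaves',
            ((treePath hT r w).1.support.toFinset.erase r).card := by
          have := Finset.card_biUnion_le (s := leaves')
            (t := fun w => (treePath hT r w).1.support.toFinset.erase r)
          omega
    have h1' := (Nat.cast_le (α := ℝ)).2 h1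
    push_cast at h1'
    exact h1'
  have hsum2 : ∑ w ∈ leaves',
      ((((treePath hT r w).1.support.toFinset.erase r).card : ℝ)) ≤
      (leaves'.card : ℝ) * (M / 2 + 1) := by
    calc ∑ w ∈ leaves',
        ((((treePath hT r w).1.support.toFinset.erase r).card : ℝ)) ≤
        ∑ _w ∈ leaves', (M / 2 + 1) := Finset.sum_le_sum hpiece
      _ = (leaves'.card : ℝ) * (M / 2 + 1) := by
        rw [Finset.sum_const, nsmul_eq_mul]
  -- relate leaves' card to L
  have hrleaf : r ∈ univ.filter (fun w : V => G.degree w = 1) := by simp [hr]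
  have hL'card : leaves'.card + 1 = L := by
    rw [hleaves', hL, Finset.card_erase_of_mem hrleaf]
    have : 1 ≤ (univ.filter (fun w : V => G.degree w = 1)).card :=
      Finset.card_pos.2 ⟨r, hrleaf⟩
    omega
  -- final arithmetic
  have hM1 : (1 : ℝ) ≤ M / 2 + 1 := by linarith
  have hL'real : (leaves'.card : ℝ) + 1 = (L : ℝ) := by exact_mod_cast hL'card
  have hfinal : (Fintype.card V : ℝ) ≤ (L : ℝ) * (M / 2 + 1) := by
    have h0 : (0 : ℝ) ≤ (leaves'.card : ℝ) := Nat.cast_nonneg _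
    nlinarith [hncard, hsum2]
  calc (Fintype.card V : ℝ) ≤ (L : ℝ) * (M / 2 + 1) := hfinal
    _ ≤ Real.exp (M / Real.exp 1) * (M / 2 + 1) := by
      apply mul_le_mul_of_nonneg_right hLreal (by linarith)
    _ = (M / 2 + 1) * Real.exp (M / Real.exp 1) := by ring
end

section
/- Let W be a finite connected graph satisfying: (1) every block of W is a cycle or a cut edge, and (2) every cut vertex of W belongs to exactly two blocks and separates W into two parts each containing an odd number of edges lying in cyclic blocks. If the block graph B(W) is a tree with at least three vertices, then every leaf of B(W) is an odd cycle. -/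
open SimpleGraph

variable {V : Type*}

/-- A set of vertices inducing a connected subgraph with no cut vertex
(single vertices allowed). -/
def IsBiconn (G : SimpleGraph V) (B : Set V) : Prop :=
  (SimpleGraph.induce B G).Connected ∧
    ∀ v ∈ B, B = {v} ∨ (SimpleGraph.induce (B \ {v}) G).Connected

/-- A block of `G`: a maximal biconnected set of vertices. -/
def IsBlock (G : SimpleGraph V) (B : Set V) : Prop :=
  IsBiconn G B ∧ ∀ B' : Set V, IsBiconn G B' → B ⊆ B' → B = B'

/-- The block graph of `G`: vertices are the blocks of `G`, two blocks adjacent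
iff they share a vertex. -/
def BlockGraph (G : SimpleGraph V) : SimpleGraph {B : Set V // IsBlock G B} where
  Adj B B' := B ≠ B' ∧ (B.1 ∩ B'.1).Nonempty
  symm := by
    constructor
    intro a b h
    exact ⟨h.1.symm, by rw [Set.inter_comm]; exact h.2⟩
  loopless := ⟨fun a h => h.1 rfl⟩

/-- A cut vertex: its removal disconnects the (connected) graph. -/
def IsCutVertex (G : SimpleGraph V) (v : V) : Prop :=
  G.Connected ∧ ¬ (SimpleGraph.induce ({v}ᶜ : Set V) G).Connected

/-- The set `B` induces a cycle: at least three vertices, connected, every vertex having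
exactly two neighbours inside `B`. -/
def IsCycleSet (G : SimpleGraph V) (B : Set V) : Prop :=
  3 ≤ B.ncard ∧ (SimpleGraph.induce B G).Connected ∧
    ∀ v ∈ B, (G.neighborSet v ∩ B).ncard = 2

/-- The set `B` consists of the two endpoints of a single edge. -/
def IsEdgeBlock (G : SimpleGraph V) (B : Set V) : Prop :=
  ∃ a b : V, a ≠ b ∧ G.Adj a b ∧ B = {a, b}

/-- The edges of `G` lying in cyclic blocks. -/
def cyclicEdges (G : SimpleGraph V) : Set (Sym2 V) :=
  {e | e ∈ G.edgeSet ∧ ∃ B : Set V, IsBlock G B ∧ IsCycleSet G B ∧ ∀ x ∈ e, x ∈ B}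

/-- Condition (2): every cut vertex belongs to exactly two blocks and separates the graph
into two parts, each containing an odd number of edges lying in cyclic blocks. -/
def CutVertexCondition (G : SimpleGraph V) : Prop :=
  ∀ v : V, IsCutVertex G v →
    {B : Set V | IsBlock G B ∧ v ∈ B}.ncard = 2 ∧
    ∃ A₁ A₂ : Set V, A₁ ∪ A₂ = {v}ᶜ ∧ Disjoint A₁ A₂ ∧ A₁.Nonempty ∧ A₂.Nonempty ∧
      (∀ a ∈ A₁, ∀ b ∈ A₂, ¬ G.Adj a b) ∧
      Odd {e | e ∈ cyclicEdges G ∧ ∀ x ∈ e, x ∈ insert v A₁}.ncard ∧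
      Odd {e | e ∈ cyclicEdges G ∧ ∀ x ∈ e, x ∈ insert v A₂}.ncard

section Helpers
variable {G : SimpleGraph V}

lemma conn_iff (s : Set V) : (G.induce s).Connected ↔
    s.Nonempty ∧ ∀ a ∈ s, ∀ b ∈ s, ∃ p : G.Walk a b, ∀ x ∈ p.support, x ∈ s := by
  rw [connected_induce_iff, Subgraph.connected_iff_forall_exists_walk_subgraph]
  simp only [Subgraph.induce_verts]
  constructor
  · rintro ⟨hn, h⟩
    refine ⟨hn, fun a ha b hb => ?_⟩
    obtain ⟨p, hp⟩ := h ha hb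
    exact ⟨p, fun x hx => (Subgraph.verts_mono hp) (by simpa using hx)⟩
  · rintro ⟨hn, h⟩
    refine ⟨hn, fun {a b} ha hb => ?_⟩
    obtain ⟨p, hp⟩ := h a ha b hb
    refine ⟨p, ?_⟩
    constructor
    · intro x hx; exact hp x (by simpa using hx)
    · intro x y hxy
      simp only [Subgraph.induce_adj, Subgraph.top_adj]
      refine ⟨hp x ?_, hp y ?_, p.toSubgraph.adj_sub hxy⟩
      · have := p.toSubgraph.edge_vert hxy; rwa [Walk.verts_toSubgraph] at this
      · have := p.toSubgraph.edge_vert hxy.symm; rwa [Walk.verts_toSubgraph] at this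

lemma walk_in {s : Set V} (h : (G.induce s).Connected) {a b : V} (ha : a ∈ s) (hb : b ∈ s) :
    ∃ p : G.Walk a b, ∀ x ∈ p.support, x ∈ s :=
  ((conn_iff s).1 h).2 a ha b hb

lemma conn_of_hub {s : Set V} (b : V) (hb : b ∈ s)
    (h : ∀ x ∈ s, ∃ p : G.Walk x b, ∀ y ∈ p.support, y ∈ s) :
    (G.induce s).Connected := by
  rw [conn_iff]
  refine ⟨⟨b, hb⟩, fun a ha c hc => ?_⟩
  obtain ⟨p, hp⟩ := h a ha
  obtain ⟨q, hq⟩ := h c hc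
  refine ⟨p.append q.reverse, fun x hx => ?_⟩
  rw [Walk.mem_support_append_iff] at hx
  rcases hx with hx | hx
  · exact hp x hx
  · exact hq x (by rwa [Walk.support_reverse, List.mem_reverse] at hx)

lemma exists_walk_avoid_end {b u x : V} (Q : G.Walk b u) (hQ : Q.IsPath)
    (hx : x ∈ Q.support) (hxu : x ≠ u) :
    ∃ p : G.Walk b x, (∀ y ∈ p.support, y ∈ Q.support) ∧ u ∉ p.support := by
  classical
  refine ⟨Q.takeUntil x hx, fun y hy => Q.support_takeUntil_subset hx hy, fun hu => ?_⟩
  have hspec := Q.take_spec hx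
  have hnodup : Q.support.Nodup := hQ.support_nodup
  rw [← hspec, Walk.support_append] at hnodup
  have hu2 : u ∈ (Q.dropUntil x hx).support.tail :=
    Walk.end_mem_tail_support_of_ne hxu _
  exact (List.disjoint_of_nodup_append hnodup) hu hu2

lemma singleton_connected (v : V) : (G.induce {v}).Connected := by
  rw [conn_iff]
  refine ⟨⟨v, rfl⟩, ?_⟩
  intro a ha b hb
  rw [Set.mem_singleton_iff] at ha hb
  subst ha; subst hb
  exact ⟨Walk.nil, by simp⟩

lemma biconn_pair {a b : V} (h : G.Adj a b) : IsBiconn G {a, b} := by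
  refine ⟨induce_pair_connected_of_adj h, ?_⟩
  have hab : a ≠ b := h.ne
  rintro v (rfl | rfl)
  · right
    have : ({v, b} : Set V) \ {v} = {b} := by
      ext x; simp only [Set.mem_diff, Set.mem_insert_iff, Set.mem_singleton_iff]
      constructor
      · rintro ⟨rfl | rfl, h2⟩ <;> simp_all
      · rintro rfl; exact ⟨Or.inr rfl, hab.symm⟩
    rw [this]; exact singleton_connected b
  · right
    have : ({a, v} : Set V) \ {v} = {a} := by
      ext x; simp only [Set.mem_diff, Set.mem_insert_iff, Set.mem_singleton_iff]
      constructor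
      · rintro ⟨rfl | rfl, h2⟩ <;> simp_all
      · rintro rfl; exact ⟨Or.inl rfl, hab⟩
    rw [this]; exact singleton_connected a

lemma exists_block_superset [Finite V] {S : Set V} (h : IsBiconn G S) :
    ∃ B, IsBlock G B ∧ S ⊆ B := by
  set T : Set (Set V) := {B | IsBiconn G B ∧ S ⊆ B} with hT
  obtain ⟨B, hB, hmax⟩ := Set.Finite.exists_maximalFor Set.ncard T T.toFinite
    ⟨S, h, subset_rfl⟩
  refine ⟨B, ⟨hB.1, fun B' hB' hsub => ?_⟩, hB.2⟩
  have hB'T : B' ∈ T := ⟨hB', hB.2.trans hsub⟩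
  exact Set.eq_of_subset_of_ncard_le hsub
    (hmax hB'T (Set.ncard_le_ncard hsub B'.toFinite)) B'.toFinite

lemma block_eq_of_two_shared {B C : Set V} (hB : IsBlock G B) (hC : IsBlock G C)
    {v w : V} (hv : v ∈ B ∩ C) (hw : w ∈ B ∩ C) (hvw : v ≠ w) : B = C := by
  have hbc : IsBiconn G (B ∪ C) := by
    refine ⟨induce_union_connected hB.1.1.preconnected hC.1.1.preconnected ⟨v, hv⟩, fun u hu => ?_⟩
    right
    have hvwu : v ≠ u ∨ w ≠ u := by
      by_contra hc
      push_neg at hc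
      exact hvw (hc.1.trans hc.2.symm)
    rw [Set.union_diff_distrib]
    have hBu : (G.induce (B \ {u})).Connected := by
      by_cases h : u ∈ B
      · rcases hB.1.2 u h with h1 | h1
        · exfalso
          rcases hvwu with h2 | h2
          · exact h2 (by have := hv.1; rw [h1] at this; exact this)
          · exact h2 (by have := hw.1; rw [h1] at this; exact this)
        · exact h1
      · rw [Set.diff_singleton_eq_self h]; exact hB.1.1
    have hCu : (G.induce (C \ {u})).Connected := by
      by_cases h : u ∈ C
      · rcases hC.1.2 u h with h1 | h1
        · exfalso
          rcases hvwu with h2 | h2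
          · exact h2 (by have := hv.2; rw [h1] at this; exact this)
          · exact h2 (by have := hw.2; rw [h1] at this; exact this)
        · exact h1
      · rw [Set.diff_singleton_eq_self h]; exact hC.1.1
    refine induce_union_connected hBu.preconnected hCu.preconnected ?_
    rcases hvwu with h2 | h2
    · exact ⟨v, ⟨hv.1, h2⟩, ⟨hv.2, h2⟩⟩
    · exact ⟨w, ⟨hw.1, h2⟩, ⟨hw.2, h2⟩⟩
  have h1 : B = B ∪ C := hB.2 _ hbc Set.subset_union_left
  have h2 : C ⊆ B := by rw [h1]; exact Set.subset_union_right
  exact (hC.2 B hB.1 h2).symm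

lemma biconn_diff_conn {B : Set V} (hB : IsBiconn G B) {u w : V} (hw : w ∈ B) (hwu : w ≠ u) :
    (G.induce (B \ {u})).Connected := by
  by_cases hu : u ∈ B
  · rcases hB.2 u hu with h | h
    · exact absurd (by rw [h] at hw; exact hw) hwu
    · exact h
  · rw [Set.diff_singleton_eq_self hu]; exact hB.1

lemma shared_not_conn [Finite V] {B C : Set V} (hB : IsBlock G B) (hC : IsBlock G C)
    (hne : B ≠ C) {v : V} (hvB : v ∈ B) (hvC : v ∈ C)
    {b : V} (hb : b ∈ B) (hbv : b ≠ v) {c : V} (hc : c ∈ C) (hcv : c ≠ v) :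
    ¬ (G.induce ({v}ᶜ : Set V)).Connected := by
  classical
  intro hcon
  obtain ⟨p0, hp0⟩ := walk_in hcon (show b ∈ ({v}ᶜ : Set V) from hbv) (show c ∈ ({v}ᶜ : Set V) from hcv)
  set P : G.Walk b c := p0.bypass with hPdef
  have hPpath : P.IsPath := p0.bypass_isPath
  have hPv : ∀ x ∈ P.support, x ≠ v := fun x hx => hp0 x (p0.support_bypass_subset hx)
  set S : Set V := B ∪ C ∪ {y | y ∈ P.support} with hSdef
  have hBS : B ⊆ S := fun x hx => Or.inl (Or.inl hx)
  have hCS : C ⊆ S := fun x hx => Or.inl (Or.inr hx)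
  have hPS : ∀ x ∈ P.support, x ∈ S := fun x hx => Or.inr hx
  have hSbic : IsBiconn G S := by
    constructor
    · exact induce_union_connected
        (induce_union_connected hB.1.1.preconnected hC.1.1.preconnected ⟨v, hvB, hvC⟩).preconnected
        P.connected_induce_support.preconnected ⟨b, Or.inl hb, P.start_mem_support⟩
    · intro u hu
      right
      rcases eq_or_ne u v with rfl | huv
      · -- removing v
        refine conn_of_hub b ⟨hBS hb, hbv⟩ ?_
        rintro x ⟨hxS, hxv⟩
        rw [Set.mem_singleton_iff] at hxv
        rcases hxS with (hxB | hxC) | hxP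
        · obtain ⟨q, hq⟩ := walk_in (biconn_diff_conn hB.1 hb hbv) ⟨hxB, hxv⟩ ⟨hb, hbv⟩
          exact ⟨q, fun y hy => ⟨hBS (hq y hy).1, (hq y hy).2⟩⟩
        · obtain ⟨q, hq⟩ := walk_in (biconn_diff_conn hC.1 hc hcv) ⟨hxC, hxv⟩ ⟨hc, hcv⟩
          refine ⟨q.append P.reverse, fun y hy => ?_⟩
          rw [Walk.mem_support_append_iff] at hy
          rcases hy with hy | hy
          · exact ⟨hCS (hq y hy).1, (hq y hy).2⟩
          · rw [Walk.support_reverse, List.mem_reverse] at hy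
            exact ⟨hPS y hy, hPv y hy⟩
        · refine ⟨(P.takeUntil x hxP).reverse, fun y hy => ?_⟩
          rw [Walk.support_reverse, List.mem_reverse] at hy
          have := P.support_takeUntil_subset hxP hy
          exact ⟨hPS y this, hPv y this⟩
      · -- removing u ≠ v
        have hvS : v ∈ S \ {u} := ⟨hBS hvB, Ne.symm huv⟩
        refine conn_of_hub v hvS ?_
        rintro x ⟨hxS, hxu⟩
        rw [Set.mem_singleton_iff] at hxu
        by_cases hxB : x ∈ B
        · obtain ⟨q, hq⟩ := walk_in (biconn_diff_conn hB.1 hvB huv.symm) ⟨hxB, hxu⟩ ⟨hvB, huv.symm⟩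
          exact ⟨q, fun y hy => ⟨hBS (hq y hy).1, (hq y hy).2⟩⟩
        by_cases hxC : x ∈ C
        · obtain ⟨q, hq⟩ := walk_in (biconn_diff_conn hC.1 hvC huv.symm) ⟨hxC, hxu⟩ ⟨hvC, huv.symm⟩
          exact ⟨q, fun y hy => ⟨hCS (hq y hy).1, (hq y hy).2⟩⟩
        have hxP : x ∈ P.support := by
          rcases hxS with (h | h) | h
          · exact absurd h hxB
          · exact absurd h hxC
          · exact h
        by_cases huP : u ∈ P.support
        · have hsplit : x ∈ (P.takeUntil u huP).support ∨ x ∈ (P.dropUntil u huP).support := by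
            rw [← Walk.mem_support_append_iff, Walk.take_spec]
            exact hxP
          rcases hsplit with hx1 | hx2
          · obtain ⟨w1, hw1, hw1u⟩ :=
              exists_walk_avoid_end (P.takeUntil u huP) (hPpath.takeUntil huP) hx1 hxu
            have hbu : b ≠ u := fun h => hw1u (h ▸ w1.start_mem_support)
            obtain ⟨q, hq⟩ := walk_in (biconn_diff_conn hB.1 hvB huv.symm) ⟨hb, hbu⟩ ⟨hvB, huv.symm⟩
            refine ⟨w1.reverse.append q, fun y hy => ?_⟩
            rw [Walk.mem_support_append_iff] at hy
            rcases hy with hy | hy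
            · rw [Walk.support_reverse, List.mem_reverse] at hy
              refine ⟨hPS y (P.support_takeUntil_subset huP (hw1 y hy)), fun h => ?_⟩
              rw [Set.mem_singleton_iff] at h
              exact hw1u (h ▸ hy)
            · exact ⟨hBS (hq y hy).1, (hq y hy).2⟩
          · have hx2' : x ∈ (P.dropUntil u huP).reverse.support := by
              rw [Walk.support_reverse, List.mem_reverse]; exact hx2
            obtain ⟨w2, hw2, hw2u⟩ :=
              exists_walk_avoid_end (P.dropUntil u huP).reverse
                ((hPpath.dropUntil huP).reverse) hx2' hxu
            have hcu : c ≠ u := fun h => hw2u (h ▸ w2.start_mem_support)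
            obtain ⟨q, hq⟩ := walk_in (biconn_diff_conn hC.1 hvC huv.symm) ⟨hc, hcu⟩ ⟨hvC, huv.symm⟩
            refine ⟨w2.reverse.append q, fun y hy => ?_⟩
            rw [Walk.mem_support_append_iff] at hy
            rcases hy with hy | hy
            · rw [Walk.support_reverse, List.mem_reverse] at hy
              have hy' : y ∈ (P.dropUntil u huP).support := by
                have := hw2 y hy
                rwa [Walk.support_reverse, List.mem_reverse] at this
              refine ⟨hPS y (P.support_dropUntil_subset huP hy'), fun h => ?_⟩
              rw [Set.mem_singleton_iff] at h
              exact hw2u (h ▸ hy)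
            · exact ⟨hCS (hq y hy).1, (hq y hy).2⟩
        · have hbu : b ≠ u := fun h => huP (h ▸ P.start_mem_support)
          obtain ⟨q, hq⟩ := walk_in (biconn_diff_conn hB.1 hvB huv.symm) ⟨hb, hbu⟩ ⟨hvB, huv.symm⟩
          refine ⟨(P.takeUntil x hxP).reverse.append q, fun y hy => ?_⟩
          rw [Walk.mem_support_append_iff] at hy
          rcases hy with hy | hy
          · rw [Walk.support_reverse, List.mem_reverse] at hy
            have hyP := P.support_takeUntil_subset hxP hy
            exact ⟨hPS y hyP, fun h => huP (by rw [Set.mem_singleton_iff] at h; exact h ▸ hyP)⟩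
          · exact ⟨hBS (hq y hy).1, (hq y hy).2⟩
  have h1 : B = S := hB.2 S hSbic hBS
  have h2 : C ⊆ B := h1 ▸ hCS
  exact hne (hC.2 B hB.1 h2).symm

lemma walk_side {A₁ A₂ : Set V} (hdisj : Disjoint A₁ A₂)
    (hsep : ∀ a ∈ A₁, ∀ b ∈ A₂, ¬ G.Adj a b) {a b : V} (p : G.Walk a b)
    (hsupp : ∀ x ∈ p.support, x ∈ A₁ ∪ A₂) (ha : a ∈ A₁) : b ∈ A₁ := by
  induction p with
  | nil => exact ha
  | @cons s t u hadj q ih =>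
    have hy : t ∈ A₁ ∪ A₂ := hsupp t (by simp)
    have hy1 : t ∈ A₁ := by
      rcases hy with hy | hy
      · exact hy
      · exact absurd hadj (hsep s ha t hy)
    exact ih (fun w hw => hsupp w (by simp [hw])) hy1

lemma edge_in_block [Finite V] {a b : V} (h : G.Adj a b) :
    ∃ D, IsBlock G D ∧ a ∈ D ∧ b ∈ D := by
  obtain ⟨D, hD, hsub⟩ := exists_block_superset (biconn_pair h)
  exact ⟨D, hD, hsub (by simp), hsub (by simp)⟩

lemma enter_block [Finite V] {B : Set V} (hB : IsBlock G B) {v : V}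
    (hkey : ∀ D, IsBlock G D → D ≠ B → ∀ w, w ∈ D → w ∈ B → w = v)
    {x z : V} (p : G.Walk x z) (hx : x ∉ B) (hz : z ∈ B)
    (hav : ∀ y ∈ p.support, y ≠ v) : False := by
  induction p with
  | nil => exact hx hz
  | @cons s t u hadj q ih =>
    by_cases htB : t ∈ B
    · obtain ⟨D, hD, hsD, htD⟩ := edge_in_block hadj
      have hDB : D ≠ B := fun hEq => hx (hEq ▸ hsD)
      have : t = v := hkey D hD hDB t htD htB
      exact (hav t (by simp)) this
    · exact ih htB hz (fun y hy => hav y (by simp [hy]))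

lemma count_cycle_edges [Fintype V] {B : Set V}
    (hcyc : ∀ u ∈ B, (G.neighborSet u ∩ B).ncard = 2) :
    {e | e ∈ G.edgeSet ∧ ∀ x ∈ e, x ∈ B}.ncard = B.ncard := by
  classical
  set G' : SimpleGraph V :=
    { Adj := fun a b => G.Adj a b ∧ a ∈ B ∧ b ∈ B
      symm := ⟨fun a b h => ⟨h.1.symm, h.2.2, h.2.1⟩⟩
      loopless := ⟨fun a h => G.loopless.irrefl a h.1⟩ } with hG'
  letI : DecidableRel G'.Adj := Classical.decRel _
  have hedge : G'.edgeSet = {e | e ∈ G.edgeSet ∧ ∀ x ∈ e, x ∈ B} := by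
    ext e
    induction e using Sym2.ind with
    | _ a b =>
      simp only [mem_edgeSet, Set.mem_setOf_eq, Sym2.mem_iff, hG']
      constructor
      · rintro ⟨h1, h2, h3⟩
        exact ⟨h1, fun x hx => by rcases hx with rfl | rfl <;> assumption⟩
      · rintro ⟨h1, h2⟩
        exact ⟨h1, h2 a (Or.inl rfl), h2 b (Or.inr rfl)⟩
  have hdeg : ∀ u : V, G'.degree u = if u ∈ B then 2 else 0 := by
    intro u
    have hns : G'.neighborSet u = if u ∈ B then G.neighborSet u ∩ B else ∅ := by
      ext w
      by_cases hu : u ∈ B <;> simp [hG', neighborSet, hu, Set.mem_inter_iff, and_comm]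
    by_cases hu : u ∈ B
    · rw [if_pos hu]
      have h2 : (G'.neighborSet u).ncard = 2 := by rw [hns, if_pos hu]; exact hcyc u hu
      rwa [← Nat.card_coe_set_eq, Nat.card_eq_fintype_card,
        card_neighborSet_eq_degree] at h2
    · rw [if_neg hu]
      have h2 : (G'.neighborSet u).ncard = 0 := by rw [hns, if_neg hu]; simp
      rwa [← Nat.card_coe_set_eq, Nat.card_eq_fintype_card,
        card_neighborSet_eq_degree] at h2
  have hsum := G'.sum_degrees_eq_twice_card_edges
  rw [Finset.sum_congr rfl (fun u _ => hdeg u), Finset.sum_ite, Finset.sum_const,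
    Finset.sum_const, smul_eq_mul, smul_eq_mul, mul_zero, add_zero] at hsum
  have hcard1 : (Finset.filter (fun u => u ∈ B) Finset.univ).card = B.ncard := by
    rw [Set.ncard_eq_toFinset_card']
    congr 1
    ext x
    simp
  have hcard2 : {e | e ∈ G.edgeSet ∧ ∀ x ∈ e, x ∈ B}.ncard = G'.edgeFinset.card := by
    rw [← hedge, ← coe_edgeFinset, Set.ncard_coe_finset]
  omega

lemma leaf_core [Fintype V] {W : SimpleGraph V} (hconn : W.Connected)
    {BB CC : Set V} (hB : IsBlock W BB) (hC : IsBlock W CC)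
    {v : V} (hvB : v ∈ BB)
    {b : V} (hb : b ∈ BB) (hbv : b ≠ v)
    {c : V} (hc : c ∈ CC) (hcv : c ≠ v)
    (hkey : ∀ D, IsBlock W D → D ≠ BB → ∀ w, w ∈ D → w ∈ BB → w = v)
    (hblocksv : ∀ D, IsBlock W D → v ∈ D → D = BB ∨ D = CC)
    {A A' : Set V} (hunion : A ∪ A' = {v}ᶜ) (hdisj : Disjoint A A')
    (hA'ne : A'.Nonempty)
    (hsep : ∀ a ∈ A, ∀ b ∈ A', ¬ W.Adj a b)
    (hbA : b ∈ A) :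
    insert v A = BB := by
  classical
  have hmemU : ∀ x : V, x ≠ v → x ∈ A ∪ A' := by
    intro x hx; rw [hunion]; exact hx
  have hAv : ∀ x ∈ A, x ≠ v := by
    intro x hx
    have : x ∈ ({v}ᶜ : Set V) := hunion ▸ Or.inl hx
    exact this
  have hA'v : ∀ x ∈ A', x ≠ v := by
    intro x hx
    have : x ∈ ({v}ᶜ : Set V) := hunion ▸ Or.inr hx
    exact this
  -- B \ {v} ⊆ A
  have hsub1 : BB \ {v} ⊆ A := by
    rintro y ⟨hyB, hyv⟩
    rw [Set.mem_singleton_iff] at hyv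
    obtain ⟨p, hp⟩ := walk_in (biconn_diff_conn hB.1 hb hbv) ⟨hb, hbv⟩ ⟨hyB, hyv⟩
    exact walk_side hdisj hsep p (fun x hx => hmemU x (hp x hx).2) hbA
  -- reach c from outside B avoiding v
  have hreach : ∀ x, x ∉ BB → ∃ p : W.Walk x c, ∀ y ∈ p.support, y ≠ v := by
    intro x hx
    obtain ⟨p1⟩ := hconn.preconnected v x
    have hPpath : p1.bypass.IsPath := p1.bypass_isPath
    cases hP : p1.bypass with
    | nil => exact absurd hvB hx
    | @cons _ z _ hadj r =>
      have hvr : v ∉ r.support := by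
        have h2 := hPpath
        rw [hP] at h2
        have := h2.support_nodup
        rw [Walk.support_cons, List.nodup_cons] at this
        exact this.1
      have hzv : z ≠ v := hadj.ne'
      obtain ⟨D, hD, hvD, hzD⟩ := edge_in_block hadj
      rcases hblocksv D hD hvD with rfl | rfl
      · exact (enter_block hB hkey r.reverse hx hzD (fun y hy => by
            rw [Walk.support_reverse, List.mem_reverse] at hy
            exact fun h => hvr (h ▸ hy))).elim
      · obtain ⟨q, hq⟩ := walk_in (biconn_diff_conn hC.1 hc hcv) ⟨hzD, hzv⟩ ⟨hc, hcv⟩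
        refine ⟨r.reverse.append q, fun y hy => ?_⟩
        rw [Walk.mem_support_append_iff] at hy
        rcases hy with hy | hy
        · rw [Walk.support_reverse, List.mem_reverse] at hy
          exact fun h => hvr (h ▸ hy)
        · exact (hq y hy).2
  -- c lies in A'
  have hsep' : ∀ a ∈ A', ∀ b ∈ A, ¬ W.Adj a b :=
    fun a ha b hb hadj => hsep b hb a ha hadj.symm
  have hcA' : c ∈ A' := by
    obtain ⟨a', ha'⟩ := hA'ne
    have ha'B : a' ∉ BB := by
      intro h
      have : a' ∈ A := hsub1 ⟨h, hA'v a' ha'⟩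
      exact (Set.disjoint_left.mp hdisj this) ha'
    obtain ⟨p, hp⟩ := hreach a' ha'B
    exact walk_side hdisj.symm hsep' p
      (fun x hx => (Set.union_comm A' A ▸ hmemU x (hp x hx))) ha'
  -- A ⊆ B \ {v}
  have hsub2 : A ⊆ BB \ {v} := by
    intro x hx
    refine ⟨?_, hAv x hx⟩
    by_contra hxB
    obtain ⟨p, hp⟩ := hreach x hxB
    have : c ∈ A := walk_side hdisj hsep p (fun y hy => hmemU y (hp y hy)) hx
    exact (Set.disjoint_left.mp hdisj this) hcA'
  have hAeq : A = BB \ {v} := Set.Subset.antisymm hsub2 hsub1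
  rw [hAeq, Set.insert_diff_singleton, Set.insert_eq_self.mpr hvB]

lemma final_step [Fintype V] {W : SimpleGraph V} {BB : Set V} (hB : IsBlock W BB)
    (hEorC : IsEdgeBlock W BB ∨ IsCycleSet W BB)
    (hodd : Odd {e | e ∈ cyclicEdges W ∧ ∀ x ∈ e, x ∈ BB}.ncard) :
    IsCycleSet W BB ∧ Odd BB.ncard := by
  rcases hEorC with ⟨a, b, hab, hadj, rfl⟩ | hcyc
  · exfalso
    have hempty : {e | e ∈ cyclicEdges W ∧ ∀ x ∈ e, x ∈ ({a, b} : Set V)} = ∅ := by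
      refine Set.eq_empty_iff_forall_notMem.mpr ?_
      intro e he
      induction e using Sym2.ind with
      | _ p q =>
        obtain ⟨⟨hpq, D, hD, hDc, hsubD⟩, hin⟩ := he
        rw [mem_edgeSet] at hpq
        have hpab : p ∈ ({a, b} : Set V) := hin p (by simp)
        have hqab : q ∈ ({a, b} : Set V) := hin q (by simp)
        have haD : a ∈ D ∧ b ∈ D := by
          have hpD : p ∈ D := hsubD p (by simp)
          have hqD : q ∈ D := hsubD q (by simp)
          rcases hpab with rfl | rfl <;> rcases hqab with rfl | rfl
          · exact absurd rfl hpq.ne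
          · exact ⟨hpD, hqD⟩
          · exact ⟨hqD, hpD⟩
          · exact absurd rfl hpq.ne
        have hDeq : D = {a, b} := block_eq_of_two_shared hD hB
          ⟨haD.1, by simp⟩ ⟨haD.2, by simp⟩ hab
        have h3 := hDc.1
        rw [hDeq, Set.ncard_pair hab] at h3
        omega
    rw [hempty] at hodd
    simp [Set.ncard_empty] at hodd
  · refine ⟨hcyc, ?_⟩
    have hsetEq : {e | e ∈ cyclicEdges W ∧ ∀ x ∈ e, x ∈ BB} =
        {e | e ∈ W.edgeSet ∧ ∀ x ∈ e, x ∈ BB} := by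
      ext e
      constructor
      · rintro ⟨⟨he, _⟩, hin⟩; exact ⟨he, hin⟩
      · rintro ⟨he, hin⟩; exact ⟨⟨he, BB, hB, hcyc, hin⟩, hin⟩
    rw [hsetEq, count_cycle_edges hcyc.2.2] at hodd
    exact hodd

end Helpers

/-- If every block of the finite connected graph `W` is a cycle or a cut edge, every cut
vertex satisfies the separation condition, and the block graph is a tree with at least
three vertices, then every leaf of the block graph is an odd cycle. -/
theorem stmt11 [Fintype V] (W : SimpleGraph V) (hconn : W.Connected)
    (hblocks : ∀ B : Set V, IsBlock W B → IsEdgeBlock W B ∨ IsCycleSet W B)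
    (hcut : CutVertexCondition W)
    (htree : (BlockGraph W).IsTree)
    (h3 : 3 ≤ {B : Set V | IsBlock W B}.ncard) :
    ∀ B : {B : Set V // IsBlock W B},
      {B' : {B : Set V // IsBlock W B} | (BlockGraph W).Adj B B'}.ncard = 1 →
      IsCycleSet W B.1 ∧ Odd B.1.ncard := by
  classical
  intro B hleaf
  obtain ⟨Cb, hCset⟩ := Set.ncard_eq_one.mp hleaf
  have hCadj : (BlockGraph W).Adj B Cb := by
    have h : Cb ∈ {B' : {B : Set V // IsBlock W B} | (BlockGraph W).Adj B B'} := by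
      rw [hCset]; exact rfl
    exact h
  have huniq : ∀ D, (BlockGraph W).Adj B D → D = Cb := by
    intro D hD
    have h : D ∈ {B' : {B : Set V // IsBlock W B} | (BlockGraph W).Adj B B'} := hD
    rw [hCset] at h
    exact h
  have hCadj' : B ≠ Cb ∧ (B.1 ∩ Cb.1).Nonempty := hCadj
  obtain ⟨hneq, v, hvB, hvC⟩ := hCadj'
  have hB : IsBlock W B.1 := B.2
  have hC : IsBlock W Cb.1 := Cb.2
  have hne : B.1 ≠ Cb.1 := fun h => hneq (Subtype.ext h)
  have hcard2 : ∀ D : Set V, IsBlock W D → 1 < D.ncard := by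
    intro D hD
    rcases hblocks D hD with ⟨a, b, hab, _, rfl⟩ | hcyc
    · rw [Set.ncard_pair hab]; omega
    · have := hcyc.1; omega
  obtain ⟨b, hb, hbv⟩ := Set.exists_ne_of_one_lt_ncard (hcard2 B.1 hB) v
  obtain ⟨c, hc, hcv⟩ := Set.exists_ne_of_one_lt_ncard (hcard2 Cb.1 hC) v
  have hcutv : IsCutVertex W v := ⟨hconn, shared_not_conn hB hC hne hvB hvC hb hbv hc hcv⟩
  obtain ⟨htwo, A₁, A₂, hunion, hdisj, hA₁ne, hA₂ne, hsep, hodd₁, hodd₂⟩ := hcut v hcutv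
  have hblocksv : ∀ D, IsBlock W D → v ∈ D → D = B.1 ∨ D = Cb.1 := by
    intro D hD hvD
    obtain ⟨X, Y, hXY, hset⟩ := Set.ncard_eq_two.mp htwo
    have hDm : D ∈ ({X, Y} : Set (Set V)) := by
      rw [← hset]; exact ⟨hD, hvD⟩
    have hBm : B.1 ∈ ({X, Y} : Set (Set V)) := by
      rw [← hset]; exact ⟨hB, hvB⟩
    have hCm : Cb.1 ∈ ({X, Y} : Set (Set V)) := by
      rw [← hset]; exact ⟨hC, hvC⟩
    simp only [Set.mem_insert_iff, Set.mem_singleton_iff] at hDm hBm hCm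
    rcases hBm with hBm | hBm
    · rcases hCm with hCm | hCm
      · exact absurd (hBm.symm ▸ hCm.symm ▸ rfl : B.1 = Cb.1) hne
      · rw [← hBm, ← hCm] at hDm
        exact hDm
    · rcases hCm with hCm | hCm
      · rw [← hBm, ← hCm] at hDm
        exact hDm.symm
      · exact absurd (hBm.symm ▸ hCm.symm ▸ rfl : B.1 = Cb.1) hne
  have hkey : ∀ D, IsBlock W D → D ≠ B.1 → ∀ w, w ∈ D → w ∈ B.1 → w = v := by
    intro D hD hDB w hwD hwB
    by_contra hwv
    have hadjD : (BlockGraph W).Adj B ⟨D, hD⟩ := by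
      refine ⟨fun h => hDB ?_, ⟨w, hwB, hwD⟩⟩
      exact (congrArg Subtype.val h).symm
    have hDC : D = Cb.1 := congrArg Subtype.val (huniq _ hadjD)
    exact hne (block_eq_of_two_shared hB hC ⟨hvB, hvC⟩ ⟨hwB, hDC ▸ hwD⟩ (fun h => hwv h.symm))
  have hbU : b ∈ A₁ ∪ A₂ := by rw [hunion]; exact hbv
  rcases hbU with hbA | hbA
  · have hins := leaf_core hconn hB hC hvB hb hbv hc hcv hkey hblocksv hunion hdisj
      hA₂ne hsep hbA
    rw [hins] at hodd₁
    exact final_step hB (hblocks B.1 hB) hodd₁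
  · have hunion' : A₂ ∪ A₁ = {v}ᶜ := by rw [Set.union_comm]; exact hunion
    have hsep' : ∀ a ∈ A₂, ∀ b ∈ A₁, ¬ W.Adj a b := fun a ha b hb h => hsep b hb a ha h.symm
    have hins := leaf_core hconn hB hC hvB hb hbv hc hcv hkey hblocksv hunion' hdisj.symm
      hA₁ne hsep' hbA
    rw [hins] at hodd₂
    exact final_step hB (hblocks B.1 hB) hodd₂
end
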